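/- Let φ : ℝⁿ → ℝ be differentiable, strictly convex along coordinates, with ∇φ block coordinate-wise Lipschitz with constants Hᵢ > 0, and let F : ℝⁿ → ℝ be differentiable and relative smooth along coordinates with respect to φ with constants Lᵢ > 0. Fix α ∈ ℝ, set S_α = ∑_{j=1}^N L_j^α, pᵢ = Lᵢ^α/S_α, and H_max = max_i Hᵢ. Fix x ∈ ℝⁿ and for each i let dᵢ* be a minimizer of d ↦ ⟨Uᵢᵀ∇F(x), d⟩ + Lᵢ D_φ(x + Uᵢd, x). Then ∑_{i=1}^N pᵢ F(x + Uᵢdᵢ*) ≤ F(x) − (1/(2 S_α H_max)) ∑_{i=1}^N Lᵢ^{α−1} ‖Uᵢᵀ∇F(x)‖². -/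

import Mathlib

noncomputable section
open scoped RealInnerProductSpace

/-- `blockProj b i x` models `Uᵢ Uᵢᵀ x`: the vector of `ℝⁿ` keeping the coordinates of block
`i` (as given by the block assignment `b : Fin n → Fin N`) and zeroing the others.
A vector `d` of the block subspace (i.e. `Uᵢ d`) is modeled as a vector with
`blockProj b i d = d`; then `⟨Uᵢᵀ y, d⟩ = ⟪y, d⟫` and `‖Uᵢᵀ y‖ = ‖blockProj b i y‖`. -/
def blockProj {n N : ℕ} (b : Fin n → Fin N) (i : Fin N) (x : EuclideanSpace ℝ (Fin n)) :
    EuclideanSpace ℝ (Fin n) :=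
  (EuclideanSpace.equiv (Fin n) ℝ).symm (fun j => if b j = i then x j else 0)


variable {n N : ℕ}

lemma blockProj_apply (b : Fin n → Fin N) (i : Fin N) (x : EuclideanSpace ℝ (Fin n)) (j : Fin n) :
    blockProj b i x j = if b j = i then x j else 0 := rfl

lemma blockProj_idem (b : Fin n → Fin N) (i : Fin N) (x : EuclideanSpace ℝ (Fin n)) :
    blockProj b i (blockProj b i x) = blockProj b i x := by
  ext j; simp only [blockProj_apply]; split <;> simp [*]

lemma blockProj_smul (b : Fin n → Fin N) (i : Fin N) (c : ℝ) (x : EuclideanSpace ℝ (Fin n)) :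
    blockProj b i (c • x) = c • blockProj b i x := by
  ext j; simp only [blockProj_apply, PiLp.smul_apply, smul_eq_mul]; split <;> simp

lemma inner_blockProj (b : Fin n → Fin N) (i : Fin N) (y d : EuclideanSpace ℝ (Fin n)) :
    ⟪blockProj b i y, d⟫ = ⟪y, blockProj b i d⟫ := by
  simp only [PiLp.inner_apply, RCLike.inner_apply, conj_trivial, blockProj_apply]
  refine Finset.sum_congr rfl fun j _ => ?_
  split <;> ring

lemma inner_eq_blockProj (b : Fin n → Fin N) (i : Fin N) (y d : EuclideanSpace ℝ (Fin n))
    (hd : blockProj b i d = d) : ⟪y, d⟫ = ⟪blockProj b i y, d⟫ := by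
  rw [inner_blockProj, hd]

lemma descent_lemma (b : Fin n → Fin N) (i : Fin N)
    (φ : EuclideanSpace ℝ (Fin n) → ℝ) (hφdiff : Differentiable ℝ φ)
    (Hi : ℝ)
    (hφlip : ∀ (x h : EuclideanSpace ℝ (Fin n)), blockProj b i h = h →
      ‖blockProj b i (gradient φ (x + h) - gradient φ x)‖ ≤ Hi * ‖h‖)
    (x d : EuclideanSpace ℝ (Fin n)) (hd : blockProj b i d = d) :
    φ (x + d) - φ x - ⟪gradient φ x, d⟫ ≤ Hi / 2 * ‖d‖ ^ 2 := by
  set ψ : ℝ → ℝ :=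
    fun t => φ (x + t • d) - t * ⟪gradient φ x, d⟫ - Hi / 2 * ‖d‖ ^ 2 * t ^ 2 with hψ
  have hline : ∀ t : ℝ, HasDerivAt (fun s : ℝ => x + s • d) d t := fun t => by
    simpa using ((hasDerivAt_id t).smul_const d).const_add x
  have hψd : ∀ t : ℝ, HasDerivAt ψ
      (⟪gradient φ (x + t • d), d⟫ - ⟪gradient φ x, d⟫ - Hi / 2 * ‖d‖ ^ 2 * (2 * t)) t := by
    intro t
    have h1 : HasDerivAt (fun s : ℝ => φ (x + s • d)) ⟪gradient φ (x + t • d), d⟫ t := by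
      have := ((hφdiff (x + t • d)).hasGradientAt.hasFDerivAt).comp_hasDerivAt t (hline t)
      simpa [InnerProductSpace.toDual_apply_apply, Function.comp_def] using this
    have h2 : HasDerivAt (fun s : ℝ => s * ⟪gradient φ x, d⟫) ⟪gradient φ x, d⟫ t := by
      simpa using (hasDerivAt_id t).mul_const ⟪gradient φ x, d⟫
    have h3 : HasDerivAt (fun s : ℝ => Hi / 2 * ‖d‖ ^ 2 * s ^ 2)
        (Hi / 2 * ‖d‖ ^ 2 * (2 * t)) t := by
      simpa [mul_comm, mul_assoc] using (hasDerivAt_pow 2 t).const_mul (Hi / 2 * ‖d‖ ^ 2)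
    exact (h1.sub h2).sub h3
  have hanti : AntitoneOn ψ (Set.Icc (0:ℝ) 1) := by
    apply antitoneOn_of_deriv_nonpos (convex_Icc 0 1)
    · exact (Differentiable.continuous (fun t => (hψd t).differentiableAt)).continuousOn
    · intro t _
      exact ((hψd t).differentiableAt).differentiableWithinAt
    · intro t ht
      rw [interior_Icc] at ht
      rw [(hψd t).deriv]
      have h2 : blockProj b i (t • d) = t • d := by rw [blockProj_smul, hd]
      have h3 := hφlip x (t • d) h2
      have hb : ⟪gradient φ (x + t • d), d⟫ - ⟪gradient φ x, d⟫ ≤ Hi * t * ‖d‖ ^ 2 := by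
        have e1 : ⟪gradient φ (x + t • d), d⟫ - ⟪gradient φ x, d⟫
            = ⟪gradient φ (x + t • d) - gradient φ x, d⟫ := (inner_sub_left _ _ _).symm
        rw [e1, inner_eq_blockProj b i _ _ hd]
        calc ⟪blockProj b i (gradient φ (x + t • d) - gradient φ x), d⟫
            ≤ ‖blockProj b i (gradient φ (x + t • d) - gradient φ x)‖ * ‖d‖ :=
              real_inner_le_norm _ _
          _ ≤ (Hi * ‖t • d‖) * ‖d‖ := mul_le_mul_of_nonneg_right h3 (norm_nonneg d)
          _ = Hi * t * ‖d‖ ^ 2 := by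
              rw [norm_smul, Real.norm_eq_abs, abs_of_nonneg ht.1.le]; ring
      nlinarith [hb]
  have h01 := hanti (Set.left_mem_Icc.2 zero_le_one) (Set.right_mem_Icc.2 zero_le_one) zero_le_one
  simp only [hψ, zero_smul, add_zero, one_smul, zero_mul, zero_pow, mul_zero, sub_zero,
    one_mul, one_pow, mul_one] at h01
  linarith

/-- let `φ` be differentiable, strictly convex along coordinates, with
`∇φ` block coordinate-wise Lipschitz with constants `Hᵢ > 0`, and `F` differentiable and
relative smooth along coordinates w.r.t. `φ` with constants `Lᵢ > 0`.  With
`S_α = ∑ⱼ Lⱼ^α`, `pᵢ = Lᵢ^α/S_α`, `H_max = maxᵢ Hᵢ`, if for each `i` the vector `dᵢ*`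
minimizes the block subproblem, then
`∑ᵢ pᵢ F(x + Uᵢdᵢ*) ≤ F(x) − (1/(2 S_α H_max)) ∑ᵢ Lᵢ^{α−1}‖Uᵢᵀ∇F(x)‖²`. -/
theorem relative_smooth_expected_descent (n N : ℕ) (b : Fin n → Fin N)
    (φ F : EuclideanSpace ℝ (Fin n) → ℝ)
    (hφdiff : Differentiable ℝ φ) (hFdiff : Differentiable ℝ F)
    (hφsc : ∀ (x : EuclideanSpace ℝ (Fin n)) (i : Fin N),
      StrictConvexOn ℝ {d : EuclideanSpace ℝ (Fin n) | blockProj b i d = d}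
        (fun d => φ (x + d)))
    (H : Fin N → ℝ) (hH : ∀ i, 0 < H i)
    (hφlip : ∀ (x h : EuclideanSpace ℝ (Fin n)) (i : Fin N), blockProj b i h = h →
      ‖blockProj b i (gradient φ (x + h) - gradient φ x)‖ ≤ H i * ‖h‖)
    (L : Fin N → ℝ) (hL : ∀ i, 0 < L i)
    (hrel : ∀ (x d : EuclideanSpace ℝ (Fin n)) (i : Fin N), blockProj b i d = d →
      F (x + d) ≤ F x + ⟪gradient F x, d⟫
        + L i * (φ (x + d) - φ x - ⟪gradient φ x, d⟫))
    (α : ℝ) (Hmax : ℝ) (hHmax : IsGreatest (Set.range H) Hmax)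
    (x : EuclideanSpace ℝ (Fin n)) (dstar : Fin N → EuclideanSpace ℝ (Fin n))
    (hdstar : ∀ i, blockProj b i (dstar i) = dstar i)
    (hminim : ∀ i, ∀ d : EuclideanSpace ℝ (Fin n), blockProj b i d = d →
      ⟪gradient F x, dstar i⟫ + L i * (φ (x + dstar i) - φ x - ⟪gradient φ x, dstar i⟫)
        ≤ ⟪gradient F x, d⟫ + L i * (φ (x + d) - φ x - ⟪gradient φ x, d⟫)) :
    ∑ i : Fin N, (L i ^ α / ∑ j : Fin N, L j ^ α) * F (x + dstar i)
      ≤ F x - 1 / (2 * (∑ j : Fin N, L j ^ α) * Hmax)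
          * ∑ i : Fin N, L i ^ (α - 1) * ‖blockProj b i (gradient F x)‖ ^ 2 := by
  
  obtain ⟨⟨i₀, hi₀⟩, hub⟩ := hHmax
  have hNpos : 0 < N := i₀.pos
  have hHmaxpos : 0 < Hmax := hi₀ ▸ hH i₀
  -- per-block bound
  have key : ∀ i : Fin N, F (x + dstar i)
      ≤ F x - 1 / (2 * L i * Hmax) * ‖blockProj b i (gradient F x)‖ ^ 2 := by
    intro i
    set g := blockProj b i (gradient F x) with hg
    set t : ℝ := 1 / (L i * Hmax) with ht
    set d : EuclideanSpace ℝ (Fin n) := (-t) • g with hdd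
    have hd : blockProj b i d = d := by rw [hdd, blockProj_smul, hg, blockProj_idem]
    have hgg : blockProj b i g = g := by rw [hg, blockProj_idem]
    have inner1 : ⟪gradient F x, d⟫ = -t * ‖g‖ ^ 2 := by
      rw [hdd, real_inner_smul_right, inner_eq_blockProj b i _ _ hgg, ← hg,
        real_inner_self_eq_norm_sq]
    have hnd : ‖d‖ ^ 2 = t ^ 2 * ‖g‖ ^ 2 := by
      rw [hdd, norm_smul, mul_pow, Real.norm_eq_abs, sq_abs, neg_sq]
    have hDφ := descent_lemma b i φ hφdiff (H i) (fun x h => hφlip x h i) x d hd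
    have h1 := hrel x (dstar i) i (hdstar i)
    have h2 := hminim i d hd
    have hHi : H i ≤ Hmax := hub ⟨i, rfl⟩
    have hLi := hL i
    have hgn : (0:ℝ) ≤ ‖g‖ ^ 2 := sq_nonneg _
    have h3 : ⟪gradient F x, d⟫ + L i * (φ (x + d) - φ x - ⟪gradient φ x, d⟫)
        ≤ -t * ‖g‖ ^ 2 + L i * (H i / 2 * (t ^ 2 * ‖g‖ ^ 2)) := by
      rw [inner1, ← hnd]
      have := mul_le_mul_of_nonneg_left hDφ hLi.le
      linarith
    have hcoef : -t * ‖g‖ ^ 2 + L i * (H i / 2 * (t ^ 2 * ‖g‖ ^ 2))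
        ≤ -(1 / (2 * L i * Hmax)) * ‖g‖ ^ 2 := by
      have hc : -t + L i * (H i / 2 * t ^ 2) ≤ -(1 / (2 * L i * Hmax)) := by
        rw [ht, ← sub_nonneg]
        have e : -(1 / (2 * L i * Hmax)) - (-(1 / (L i * Hmax))
            + L i * (H i / 2 * (1 / (L i * Hmax)) ^ 2))
            = (Hmax - H i) / (2 * L i * Hmax ^ 2) := by
          field_simp
          ring
        rw [e]
        exact div_nonneg (by linarith) (by positivity)
      nlinarith [mul_le_mul_of_nonneg_right hc hgn]
    have := h1.trans (by linarith [h2, h3, hcoef] : F x + ⟪gradient F x, dstar i⟫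
      + L i * (φ (x + dstar i) - φ x - ⟪gradient φ x, dstar i⟫)
      ≤ F x + -(1 / (2 * L i * Hmax)) * ‖g‖ ^ 2)
    linarith
  -- summation
  set S := ∑ j : Fin N, L j ^ α with hS
  have hSpos : 0 < S := Finset.sum_pos (fun j _ => Real.rpow_pos_of_pos (hL j) α)
    ⟨i₀, Finset.mem_univ i₀⟩
  have hpsum : ∑ i : Fin N, L i ^ α / S = 1 := by
    rw [← Finset.sum_div, ← hS, div_self hSpos.ne']
  have step1 : ∑ i : Fin N, (L i ^ α / S) * F (x + dstar i)
      ≤ ∑ i : Fin N, (L i ^ α / S)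
        * (F x - 1 / (2 * L i * Hmax) * ‖blockProj b i (gradient F x)‖ ^ 2) :=
    Finset.sum_le_sum fun i _ => mul_le_mul_of_nonneg_left (key i)
      (div_nonneg (Real.rpow_pos_of_pos (hL i) α).le hSpos.le)
  have step2 : ∑ i : Fin N, (L i ^ α / S)
        * (F x - 1 / (2 * L i * Hmax) * ‖blockProj b i (gradient F x)‖ ^ 2)
      = F x - 1 / (2 * S * Hmax)
        * ∑ i : Fin N, L i ^ (α - 1) * ‖blockProj b i (gradient F x)‖ ^ 2 := by
    rw [Finset.mul_sum]
    have e : ∀ i : Fin N, L i ^ α / S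
          * (F x - 1 / (2 * L i * Hmax) * ‖blockProj b i (gradient F x)‖ ^ 2)
        = (L i ^ α / S) * F x
          - 1 / (2 * S * Hmax) * (L i ^ (α - 1) * ‖blockProj b i (gradient F x)‖ ^ 2) := by
      intro i
      have hLα : L i ^ (α - 1) = L i ^ α / L i := by
        rw [Real.rpow_sub (hL i), Real.rpow_one]
      rw [hLα]
      have hS0 : S ≠ 0 := hSpos.ne'
      have hL0 : L i ≠ 0 := (hL i).ne'
      have hH0 : Hmax ≠ 0 := hHmaxpos.ne'
      field_simp
    simp_rw [e]
    rw [Finset.sum_sub_distrib, ← Finset.sum_mul, hpsum, one_mul]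
  calc ∑ i : Fin N, (L i ^ α / S) * F (x + dstar i)
      ≤ _ := step1
    _ = _ := step2
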